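/- Let H be a k-uniform hypergraph on n vertices without isolated vertices, and let λ = max{ |1 - λ_i(H)| : i = 1, ..., n-1 }. For any subsets X, Y ⊆ V(H), | m(X,Y)/(k-1) - vol(X)vol(Y)/vol(V(H)) | ≤ λ · sqrt( vol(X) vol(V\X) vol(Y) vol(V\Y) ) / vol(V(H)), where m(X,Y) = Σ_{u∈X} Σ_{v∈Y} e_{uv}. -/

import Mathlib

open Finset Matrix
open scoped RealInnerProductSpace

variable {n : ℕ}

def hdeg (E : Finset (Finset (Fin n))) (v : Fin n) : ℕ :=
  (E.filter fun e => v ∈ e).card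

def codeg (E : Finset (Finset (Fin n))) (u v : Fin n) : ℕ :=
  (E.filter fun e => u ∈ e ∧ v ∈ e).card

noncomputable def adjMat (E : Finset (Finset (Fin n))) : Matrix (Fin n) (Fin n) ℝ :=
  fun u v => if u = v then 0
    else ∑ e ∈ E.filter (fun e => u ∈ e ∧ v ∈ e), (1 : ℝ) / ((e.card : ℝ) - 1)

noncomputable def lapMat (E : Finset (Finset (Fin n))) : Matrix (Fin n) (Fin n) ℝ :=
  Matrix.diagonal (fun v => (hdeg E v : ℝ)) - adjMat E

noncomputable def normLap (E : Finset (Finset (Fin n))) : Matrix (Fin n) (Fin n) ℝ :=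
  Matrix.diagonal (fun v => (hdeg E v : ℝ) ^ (-(1/2) : ℝ)) * lapMat E *
    Matrix.diagonal (fun v => (hdeg E v : ℝ) ^ (-(1/2) : ℝ))

noncomputable def eigsAsc (M : Matrix (Fin n) (Fin n) ℝ) : Fin n → ℝ :=
  if h : M.IsHermitian then (h.eigenvalues ∘ Tuple.sort h.eigenvalues) else 0

noncomputable def volR {n : ℕ} (E : Finset (Finset (Fin n))) (S : Finset (Fin n)) : ℝ :=
  ∑ v ∈ S, (hdeg E v : ℝ)

noncomputable def bndR {n : ℕ} (E : Finset (Finset (Fin n))) (S : Finset (Fin n)) : ℝ :=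
  ∑ u ∈ S, ∑ v ∈ Sᶜ, (codeg E u v : ℝ)

noncomputable def cheeger {n : ℕ} (E : Finset (Finset (Fin n))) : ℝ :=
  sInf {x : ℝ | ∃ S : Finset (Fin n), S.Nonempty ∧ S ≠ Finset.univ ∧
    volR E S ≤ volR E Sᶜ ∧ x = bndR E S / volR E S}

section helpers

variable {k : ℕ} {E : Finset (Finset (Fin n))}

lemma adj_entry (u v : Fin n) :
    adjMat E u v = ∑ e ∈ E, (if u ∈ e ∧ v ∈ e ∧ u ≠ v then (1:ℝ)/((e.card:ℝ)-1) else 0) := by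
  by_cases h : u = v
  · simp [adjMat, h]
  · rw [adjMat, if_neg h, Finset.sum_filter]
    refine Finset.sum_congr rfl fun e _ => ?_
    by_cases he : u ∈ e ∧ v ∈ e
    · simp [he, h]
    · rw [if_neg he, if_neg (by tauto)]

lemma adj_symm (u v : Fin n) : adjMat E u v = adjMat E v u := by
  rw [adj_entry, adj_entry]
  refine Finset.sum_congr rfl fun e _ => ?_
  congr 1
  simp only [eq_iff_iff]
  constructor
  · rintro ⟨h1, h2, h3⟩; exact ⟨h2, h1, h3.symm⟩
  · rintro ⟨h1, h2, h3⟩; exact ⟨h2, h1, h3.symm⟩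

lemma adj_eq (hk : 2 ≤ k) (hunif : ∀ e ∈ E, e.card = k) {u v : Fin n} (huv : u ≠ v) :
    adjMat E u v = (codeg E u v : ℝ) / ((k:ℝ) - 1) := by
  rw [adjMat, if_neg huv, codeg]
  have h1 : ∀ e ∈ E.filter (fun e => u ∈ e ∧ v ∈ e),
      (1:ℝ)/((e.card:ℝ)-1) = (1:ℝ)/((k:ℝ)-1) := fun e he => by
    rw [hunif e (Finset.mem_filter.mp he).1]
  rw [Finset.sum_congr rfl h1, Finset.sum_const, nsmul_eq_mul, mul_one_div]

lemma adj_nonneg (hk : 2 ≤ k) (hunif : ∀ e ∈ E, e.card = k) (u v : Fin n) :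
    0 ≤ adjMat E u v := by
  by_cases h : u = v
  · simp [adjMat, h]
  · rw [adj_eq hk hunif h]
    have : (1:ℝ) ≤ (k:ℝ) - 1 := by
      have : (2:ℝ) ≤ (k:ℝ) := by exact_mod_cast hk
      linarith
    positivity

lemma adj_rowsum (hk : 2 ≤ k) (hunif : ∀ e ∈ E, e.card = k) (u : Fin n) :
    ∑ v, adjMat E u v = (hdeg E u : ℝ) := by
  have hk1 : ((k:ℝ) - 1) ≠ 0 := by
    have : (2:ℝ) ≤ (k:ℝ) := by exact_mod_cast hk
    linarith
  calc ∑ v, adjMat E u v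
      = ∑ v, ∑ e ∈ E, (if u ∈ e ∧ v ∈ e ∧ u ≠ v then (1:ℝ)/((e.card:ℝ)-1) else 0) := by
        exact Finset.sum_congr rfl fun v _ => adj_entry u v
    _ = ∑ e ∈ E, ∑ v, (if u ∈ e ∧ v ∈ e ∧ u ≠ v then (1:ℝ)/((e.card:ℝ)-1) else 0) :=
        Finset.sum_comm
    _ = ∑ e ∈ E, (if u ∈ e then (1:ℝ) else 0) := by
        refine Finset.sum_congr rfl fun e he => ?_
        by_cases hu : u ∈ e
        · rw [if_pos hu]
          have hcond : ∀ v : Fin n, (u ∈ e ∧ v ∈ e ∧ u ≠ v) ↔ v ∈ e.erase u := by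
            intro v
            simp [Finset.mem_erase, hu, ne_comm, and_comm]
          rw [Finset.sum_congr rfl (fun v _ => by rw [if_congr (hcond v) rfl rfl])]
          rw [← Finset.sum_filter, Finset.filter_mem_eq_inter, Finset.univ_inter,
            Finset.sum_const, nsmul_eq_mul, Finset.card_erase_of_mem hu, hunif e he]
          have hcast : ((k - 1 : ℕ) : ℝ) = (k:ℝ) - 1 := by
            have : 1 ≤ k := by omega
            push_cast [this]; ring
          rw [hcast]
          field_simp
        · rw [if_neg hu]
          refine Finset.sum_eq_zero fun v _ => ?_
          rw [if_neg (by tauto)]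
    _ = (hdeg E u : ℝ) := by
        rw [← Finset.sum_filter, Finset.sum_const, nsmul_eq_mul, mul_one, hdeg]

lemma lap_mulVec_one (hk : 2 ≤ k) (hunif : ∀ e ∈ E, e.card = k) :
    lapMat E *ᵥ (fun _ => (1:ℝ)) = 0 := by
  funext u
  simp only [lapMat, Matrix.sub_mulVec, Matrix.mulVec_diagonal, Pi.sub_apply, Pi.zero_apply]
  rw [show ((adjMat E) *ᵥ (fun _ => (1:ℝ))) u = ∑ v, adjMat E u v by
    simp [Matrix.mulVec, dotProduct]]
  rw [adj_rowsum hk hunif u]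
  ring

lemma lap_hermitian : (lapMat E).IsHermitian := by
  unfold Matrix.IsHermitian
  rw [Matrix.conjTranspose_eq_transpose_of_trivial]
  unfold lapMat
  rw [Matrix.transpose_sub, Matrix.diagonal_transpose]
  congr 1
  ext i j
  exact adj_symm j i

lemma lap_posSemidef (hk : 2 ≤ k) (hunif : ∀ e ∈ E, e.card = k) :
    (lapMat E).PosSemidef := by
  rw [Matrix.posSemidef_iff_dotProduct_mulVec]; constructor
  · exact lap_hermitian
  · intro x
    have hform : star x ⬝ᵥ ((lapMat E) *ᵥ x)
        = ∑ u, ∑ v, adjMat E u v * (x u * x u - x u * x v) := by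
      simp only [star_trivial, lapMat, Matrix.sub_mulVec, dotProduct_sub]
      rw [show x ⬝ᵥ ((Matrix.diagonal fun v => (hdeg E v : ℝ)) *ᵥ x)
          = ∑ u, (hdeg E u : ℝ) * (x u * x u) by
        simp [dotProduct, Matrix.mulVec_diagonal]; exact Finset.sum_congr rfl fun u _ => by ring]
      rw [show x ⬝ᵥ ((adjMat E) *ᵥ x) = ∑ u, ∑ v, adjMat E u v * (x u * x v) by
        simp [dotProduct, Matrix.mulVec, Finset.mul_sum]; exact Finset.sum_congr rfl
          fun u _ => Finset.sum_congr rfl fun v _ => by ring]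
      rw [(Finset.sum_congr rfl (fun u (_ : u ∈ Finset.univ) => by
        rw [← adj_rowsum hk hunif u, Finset.sum_mul]) :
          ∑ u, (hdeg E u : ℝ) * (x u * x u) = ∑ u, ∑ v, adjMat E u v * (x u * x u))]
      rw [← Finset.sum_sub_distrib]
      exact Finset.sum_congr rfl fun u _ => by
        rw [← Finset.sum_sub_distrib]
        exact Finset.sum_congr rfl fun v _ => by ring
    rw [hform]
    have hdouble : (2:ℝ) * (∑ u, ∑ v, adjMat E u v * (x u * x u - x u * x v))
        = ∑ u, ∑ v, adjMat E u v * (x u - x v)^2 := by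
      have hswap : (∑ u, ∑ v, adjMat E u v * (x u * x u - x u * x v))
          = ∑ u, ∑ v, adjMat E u v * (x v * x v - x v * x u) := by
        rw [Finset.sum_comm]
        exact Finset.sum_congr rfl fun u _ => Finset.sum_congr rfl fun v _ => by
          rw [adj_symm v u]
      rw [two_mul]
      nth_rw 2 [hswap]
      rw [← Finset.sum_add_distrib]
      refine Finset.sum_congr rfl fun u _ => ?_
      rw [← Finset.sum_add_distrib]
      exact Finset.sum_congr rfl fun v _ => by ring
    have hnn : 0 ≤ ∑ u, ∑ v, adjMat E u v * (x u - x v)^2 :=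
      Finset.sum_nonneg fun u _ => Finset.sum_nonneg fun v _ =>
        mul_nonneg (adj_nonneg hk hunif u v) (sq_nonneg _)
    nlinarith [hdouble, hnn]

lemma normLap_hermitian : (normLap E).IsHermitian := by
  have hlap : (lapMat E).IsHermitian := lap_hermitian
  have hD : (Matrix.diagonal (fun v => (hdeg E v : ℝ) ^ (-(1/2) : ℝ)))ᴴ
      = Matrix.diagonal (fun v => (hdeg E v : ℝ) ^ (-(1/2) : ℝ)) := by
    rw [Matrix.diagonal_conjTranspose]
    congr 1
  have := Matrix.isHermitian_conjTranspose_mul_mul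
    (Matrix.diagonal (fun v => (hdeg E v : ℝ) ^ (-(1/2) : ℝ))) hlap
  rw [hD] at this
  exact this

lemma normLap_posSemidef (hk : 2 ≤ k) (hunif : ∀ e ∈ E, e.card = k) :
    (normLap E).PosSemidef := by
  have hD : (Matrix.diagonal (fun v => (hdeg E v : ℝ) ^ (-(1/2) : ℝ)))ᴴ
      = Matrix.diagonal (fun v => (hdeg E v : ℝ) ^ (-(1/2) : ℝ)) := by
    rw [Matrix.diagonal_conjTranspose]; congr 1
  have := (lap_posSemidef hk hunif).conjTranspose_mul_mul_same
    (Matrix.diagonal (fun v => (hdeg E v : ℝ) ^ (-(1/2) : ℝ)))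
  rw [hD] at this
  exact this

lemma dinv_mul_sqrt (hiso : ∀ v : Fin n, 0 < hdeg E v) (v : Fin n) :
    ((hdeg E v : ℝ)) ^ (-(1/2) : ℝ) * Real.sqrt (hdeg E v) = 1 := by
  have h0 : (0:ℝ) < (hdeg E v : ℝ) := by exact_mod_cast hiso v
  rw [Real.rpow_neg h0.le, ← Real.sqrt_eq_rpow]
  rw [inv_mul_cancel₀ (Real.sqrt_ne_zero'.mpr h0)]

lemma normLap_mulVec_phi (hk : 2 ≤ k) (hunif : ∀ e ∈ E, e.card = k)
    (hiso : ∀ v : Fin n, 0 < hdeg E v) :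
    normLap E *ᵥ (fun v => Real.sqrt (hdeg E v)) = 0 := by
  unfold normLap
  rw [← Matrix.mulVec_mulVec, ← Matrix.mulVec_mulVec]
  rw [show (Matrix.diagonal (fun v => (hdeg E v : ℝ) ^ (-(1/2) : ℝ))) *ᵥ
      (fun v => Real.sqrt (hdeg E v)) = (fun _ => (1:ℝ)) by
    funext v
    rw [Matrix.mulVec_diagonal]
    exact dinv_mul_sqrt hiso v]
  rw [lap_mulVec_one hk hunif]
  simp [Matrix.mulVec_zero]

end helpers

section bilin
variable {k : ℕ} {E : Finset (Finset (Fin n))}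

lemma sum_ind {X : Finset (Fin n)} (f : Fin n → ℝ) :
    ∑ u, (if u ∈ X then f u else 0) = ∑ u ∈ X, f u := by
  rw [← Finset.sum_filter, Finset.filter_mem_eq_inter, Finset.univ_inter]

lemma bilin (hk : 2 ≤ k) (hunif : ∀ e ∈ E, e.card = k) (hiso : ∀ v : Fin n, 0 < hdeg E v)
    (X Y : Finset (Fin n)) :
    (∑ u ∈ X, ∑ v ∈ Y.erase u, (codeg E u v : ℝ)) / ((k : ℝ) - 1)
      = (∑ v, (if v ∈ X then Real.sqrt (hdeg E v) else 0) *
          (if v ∈ Y then Real.sqrt (hdeg E v) else 0))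
        - (fun v => if v ∈ X then Real.sqrt (hdeg E v) else 0) ⬝ᵥ
          (normLap E *ᵥ (fun v => if v ∈ Y then Real.sqrt (hdeg E v) else 0)) := by
  set iX : Fin n → ℝ := fun v => if v ∈ X then 1 else 0 with hiX
  set iY : Fin n → ℝ := fun v => if v ∈ Y then 1 else 0 with hiY
  have hDhy : (Matrix.diagonal (fun v => (hdeg E v : ℝ) ^ (-(1/2) : ℝ))) *ᵥ
      (fun v => if v ∈ Y then Real.sqrt (hdeg E v) else 0) = iY := by
    funext v
    rw [Matrix.mulVec_diagonal]
    by_cases hv : v ∈ Y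
    · simp only [hiY, hv, if_true]
      exact dinv_mul_sqrt hiso v
    · simp [hiY, hv]
  have step1 : normLap E *ᵥ (fun v => if v ∈ Y then Real.sqrt (hdeg E v) else 0)
      = (Matrix.diagonal (fun v => (hdeg E v : ℝ) ^ (-(1/2) : ℝ))) *ᵥ (lapMat E *ᵥ iY) := by
    unfold normLap
    rw [← Matrix.mulVec_mulVec, ← Matrix.mulVec_mulVec, hDhy]
  rw [step1]
  have step2 : (fun v => if v ∈ X then Real.sqrt (hdeg E v) else 0) ⬝ᵥ
      ((Matrix.diagonal (fun v => (hdeg E v : ℝ) ^ (-(1/2) : ℝ))) *ᵥ (lapMat E *ᵥ iY))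
      = ∑ u, iX u * ((lapMat E *ᵥ iY) u) := by
    rw [dotProduct]
    refine Finset.sum_congr rfl fun u _ => ?_
    rw [Matrix.mulVec_diagonal]
    by_cases hu : u ∈ X
    · simp only [hu, if_true, hiX]
      rw [← mul_assoc, mul_comm (Real.sqrt _), dinv_mul_sqrt hiso u, one_mul]
    · simp [hiX, hu]
  rw [step2]
  have step3 : ∀ u, (lapMat E *ᵥ iY) u
      = (hdeg E u : ℝ) * iY u - ∑ v, adjMat E u v * iY v := by
    intro u
    simp only [lapMat, Matrix.sub_mulVec, Pi.sub_apply, Matrix.mulVec_diagonal]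
    congr 1
  have step4 : (∑ v, (if v ∈ X then Real.sqrt (hdeg E v) else 0) *
      (if v ∈ Y then Real.sqrt (hdeg E v) else 0)) = ∑ v, iX v * iY v * (hdeg E v : ℝ) := by
    refine Finset.sum_congr rfl fun v _ => ?_
    by_cases hv : v ∈ X <;> by_cases hv' : v ∈ Y <;>
      simp [hiX, hiY, hv, hv', Real.mul_self_sqrt (Nat.cast_nonneg _)]
  rw [step4]
  have step5 : ∑ v, iX v * iY v * (hdeg E v : ℝ) - ∑ u, iX u * ((lapMat E *ᵥ iY) u)
      = ∑ u, iX u * (∑ v, adjMat E u v * iY v) := by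
    rw [← Finset.sum_sub_distrib]
    refine Finset.sum_congr rfl fun u _ => ?_
    rw [step3 u]
    ring
  rw [step5]
  have h6a : ∀ u, iX u * (∑ v, adjMat E u v * iY v)
      = (if u ∈ X then (∑ v ∈ Y, adjMat E u v) else 0) := by
    intro u
    by_cases hu : u ∈ X
    · simp only [hiX, hu, if_true, one_mul]
      rw [← sum_ind (f := fun v => adjMat E u v)]
      refine Finset.sum_congr rfl fun v _ => ?_
      by_cases hv : v ∈ Y <;> simp [hiY, hv]
    · simp [hiX, hu]
  rw [Finset.sum_congr rfl (fun u _ => h6a u), sum_ind]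
  have h7 : ∀ u ∈ X, ∑ v ∈ Y, adjMat E u v
      = ∑ v ∈ Y.erase u, (codeg E u v : ℝ) / ((k:ℝ) - 1) := by
    intro u _
    rw [← Finset.sum_erase (s := Y) (f := fun v => adjMat E u v) (a := u) (by simp [adjMat])]
    refine Finset.sum_congr rfl fun v hv => ?_
    exact adj_eq hk hunif (Ne.symm (Finset.mem_erase.mp hv).1)
  rw [Finset.sum_congr rfl h7]
  rw [Finset.sum_div]
  exact Finset.sum_congr rfl fun u _ => by rw [Finset.sum_div]

end bilin


theorem stmt19 (n k : ℕ) (hn : 2 ≤ n) (hk : 2 ≤ k) (E : Finset (Finset (Fin n)))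
    (hunif : ∀ e ∈ E, e.card = k) (hiso : ∀ v : Fin n, 0 < hdeg E v)
    (lam : ℝ)
    (hlam : lam = ⨆ i : {i : Fin n // i ≠ ⟨0, by omega⟩}, |1 - eigsAsc (normLap E) i.1|)
    (X Y : Finset (Fin n)) :
    |(∑ u ∈ X, ∑ v ∈ Y.erase u, (codeg E u v : ℝ)) / ((k : ℝ) - 1) -
        volR E X * volR E Y / volR E Finset.univ| ≤
      lam * Real.sqrt (volR E X * volR E Xᶜ * volR E Y * volR E Yᶜ) /
        volR E Finset.univ := by
  have hL : (normLap E).IsHermitian := normLap_hermitian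
  set μ : Fin n → ℝ := hL.eigenvalues with hμdef
  set b := hL.eigenvectorBasis with hbdef
  set xv : EuclideanSpace ℝ (Fin n) :=
    WithLp.toLp 2 (fun v => if v ∈ X then Real.sqrt (hdeg E v) else 0) with hxvdef
  set yv : EuclideanSpace ℝ (Fin n) :=
    WithLp.toLp 2 (fun v => if v ∈ Y then Real.sqrt (hdeg E v) else 0) with hyvdef
  set ph : EuclideanSpace ℝ (Fin n) := WithLp.toLp 2 (fun v => Real.sqrt (hdeg E v)) with hphdef
  have hinner : ∀ a c : EuclideanSpace ℝ (Fin n), ⟪a, c⟫ = ∑ j, a j * c j := by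
    intro a c
    simp [PiLp.inner_apply, RCLike.inner_apply, mul_comm]
  -- symmetry of L as bilinear form
  have hLt : (normLap E)ᵀ = normLap E := by
    have h := hL
    rwa [Matrix.IsHermitian, Matrix.conjTranspose_eq_transpose_of_trivial] at h
  have hLsym : ∀ (a c : Fin n → ℝ),
      ∑ j, a j * ((normLap E *ᵥ c) j) = ∑ j, ((normLap E *ᵥ a) j) * c j := by
    intro a c
    have h1 : ∑ j, a j * ((normLap E *ᵥ c) j) = a ⬝ᵥ (normLap E *ᵥ c) := rfl
    have h2 : ∑ j, ((normLap E *ᵥ a) j) * c j = (normLap E *ᵥ a) ⬝ᵥ c := rfl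
    rw [h1, h2, Matrix.dotProduct_mulVec]
    congr 1
    conv_lhs => rw [← hLt]
    rw [Matrix.vecMul_transpose]
  -- components with respect to the eigenbasis
  set cs : Fin n → ℝ := fun i => ∑ j, (b i : EuclideanSpace ℝ (Fin n)) j * xv j with hcsdef
  set ds : Fin n → ℝ := fun i => ∑ j, (b i : EuclideanSpace ℝ (Fin n)) j * yv j with hdsdef
  set es : Fin n → ℝ := fun i => ∑ j, (b i : EuclideanSpace ℝ (Fin n)) j * ph j with hesdef
  have hsum : ∀ p q : EuclideanSpace ℝ (Fin n),
      ∑ i, (∑ j, (b i : EuclideanSpace ℝ (Fin n)) j * p j) *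
        (∑ j, (b i : EuclideanSpace ℝ (Fin n)) j * q j) = ∑ j, p j * q j := by
    intro p q
    have h := b.sum_inner_mul_inner p q
    simp only [hinner] at h
    rw [← h]
    refine Finset.sum_congr rfl fun i _ => ?_
    congr 1
    exact Finset.sum_congr rfl fun j _ => mul_comm _ _
  have hmulvec : ∀ (i : Fin n) (w : Fin n → ℝ),
      ∑ j, (b i : EuclideanSpace ℝ (Fin n)) j * ((normLap E *ᵥ w) j)
        = μ i * ∑ j, (b i : EuclideanSpace ℝ (Fin n)) j * w j := by
    intro i w
    rw [hLsym, Finset.mul_sum]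
    refine Finset.sum_congr rfl fun j _ => ?_
    have h3 := congrFun (hL.mulVec_eigenvectorBasis i) j
    rw [show (normLap E *ᵥ fun j => (b i : EuclideanSpace ℝ (Fin n)) j) j
        = μ i * (b i : EuclideanSpace ℝ (Fin n)) j from h3]
    ring
  -- μ i * es i = 0
  have hμe : ∀ i, μ i * es i = 0 := by
    intro i
    have h0 : normLap E *ᵥ (ph : Fin n → ℝ) = 0 := normLap_mulVec_phi hk hunif hiso
    have h1 := hmulvec i (ph : Fin n → ℝ)
    rw [h0] at h1
    simp only [Pi.zero_apply, mul_zero, Finset.sum_const_zero] at h1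
    exact h1.symm
  -- basic values
  have hvol_nonneg : ∀ S : Finset (Fin n), 0 ≤ volR E S := fun S =>
    Finset.sum_nonneg fun v _ => Nat.cast_nonneg _
  set t : ℝ := volR E Finset.univ with htdef
  have ht : 0 < t := by
    rw [htdef, volR]
    refine Finset.sum_pos (fun v _ => by exact_mod_cast hiso v) ⟨⟨0, by omega⟩, Finset.mem_univ _⟩
  have hip : ∀ (S : Finset (Fin n)) (w : Fin n → ℝ),
      (∀ v, w v = if v ∈ S then Real.sqrt (hdeg E v) else 0) →
      ∀ (T : Finset (Fin n)) (w' : Fin n → ℝ),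
      (∀ v, w' v = if v ∈ T then Real.sqrt (hdeg E v) else 0) → S ⊆ T →
      ∑ j, w j * w' j = volR E S := by
    intro S w hw T w' hw' hST
    rw [volR, ← sum_ind (X := S) (f := fun v => (hdeg E v : ℝ))]
    refine Finset.sum_congr rfl fun v _ => ?_
    rw [hw, hw']
    by_cases hv : v ∈ S
    · rw [if_pos hv, if_pos (hST hv), if_pos hv, Real.mul_self_sqrt (Nat.cast_nonneg _)]
    · rw [if_neg hv, zero_mul, if_neg hv]
  have hwx : ∀ v, xv v = if v ∈ X then Real.sqrt (hdeg E v) else 0 := fun v => by rw [hxvdef]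
  have hwy : ∀ v, yv v = if v ∈ Y then Real.sqrt (hdeg E v) else 0 := fun v => by rw [hyvdef]
  have hwp : ∀ v, ph v = if v ∈ Finset.univ then Real.sqrt (hdeg E v) else 0 := fun v => by
    rw [hphdef]; simp
  have hc2 : ∑ i, cs i * cs i = volR E X := by
    rw [hsum xv xv]; exact hip X xv hwx X xv hwx (Finset.Subset.refl X)
  have hd2 : ∑ i, ds i * ds i = volR E Y := by
    rw [hsum yv yv]; exact hip Y yv hwy Y yv hwy (Finset.Subset.refl Y)
  have he2 : ∑ i, es i * es i = t := by
    rw [hsum ph ph, htdef]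
    exact hip Finset.univ ph hwp Finset.univ ph hwp (Finset.Subset.refl _)
  have hce : ∑ i, cs i * es i = volR E X := by
    rw [hsum xv ph]; exact hip X xv hwx Finset.univ ph hwp (Finset.subset_univ X)
  have hde : ∑ i, ds i * es i = volR E Y := by
    rw [hsum yv ph]; exact hip Y yv hwy Finset.univ ph hwp (Finset.subset_univ Y)
  have hcd : ∑ i, cs i * ds i = ∑ j, xv j * yv j := hsum xv yv
  -- the Laplacian bilinear form in coordinates
  have hLxy : ∑ j, xv j * ((normLap E *ᵥ (yv : Fin n → ℝ)) j) = ∑ i, μ i * (cs i * ds i) := by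
    rw [← hsum xv (WithLp.toLp 2 (normLap E *ᵥ (yv : Fin n → ℝ)))]
    refine Finset.sum_congr rfl fun i _ => ?_
    rw [hmulvec i (yv : Fin n → ℝ)]
    ring
  -- main identity
  have hbil : (∑ u ∈ X, ∑ v ∈ Y.erase u, (codeg E u v : ℝ)) / ((k : ℝ) - 1)
      = (∑ v, xv v * yv v) - ∑ j, xv j * ((normLap E *ᵥ (yv : Fin n → ℝ)) j) :=
    bilin hk hunif hiso X Y
  set α : ℝ := volR E X / t with hα
  set β : ℝ := volR E Y / t with hβ
  set c' : Fin n → ℝ := fun i => cs i - α * es i with hc'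
  set d' : Fin n → ℝ := fun i => ds i - β * es i with hd'
  have hec' : ∑ i, es i * c' i = 0 := by
    have h1 : ∀ i, es i * c' i = cs i * es i - α * (es i * es i) := fun i => by
      simp only [hc']; ring
    rw [Finset.sum_congr rfl fun i _ => h1 i, Finset.sum_sub_distrib, ← Finset.mul_sum,
      hce, he2, hα]
    field_simp; ring
  have hed' : ∑ i, es i * d' i = 0 := by
    have h1 : ∀ i, es i * d' i = ds i * es i - β * (es i * es i) := fun i => by
      simp only [hd']; ring
    rw [Finset.sum_congr rfl fun i _ => h1 i, Finset.sum_sub_distrib, ← Finset.mul_sum,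
      hde, he2, hβ]
    field_simp; ring
  have hXc : volR E Xᶜ = t - volR E X := by
    have h := Finset.sum_add_sum_compl X (fun v => (hdeg E v : ℝ))
    rw [htdef]
    simp only [volR] at *
    linarith
  have hYc : volR E Yᶜ = t - volR E Y := by
    have h := Finset.sum_add_sum_compl Y (fun v => (hdeg E v : ℝ))
    rw [htdef]
    simp only [volR] at *
    linarith
  have hc'2 : ∑ i, c' i * c' i = volR E X * volR E Xᶜ / t := by
    have h1 : ∀ i, c' i * c' i
        = cs i * cs i - 2*α*(cs i * es i) + α^2*(es i * es i) := fun i => by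
      simp only [hc']; ring
    rw [Finset.sum_congr rfl fun i _ => h1 i, Finset.sum_add_distrib, Finset.sum_sub_distrib,
      ← Finset.mul_sum, ← Finset.mul_sum, hc2, hce, he2, hXc, hα]
    field_simp
    ring
  have hd'2 : ∑ i, d' i * d' i = volR E Y * volR E Yᶜ / t := by
    have h1 : ∀ i, d' i * d' i
        = ds i * ds i - 2*β*(ds i * es i) + β^2*(es i * es i) := fun i => by
      simp only [hd']; ring
    rw [Finset.sum_congr rfl fun i _ => h1 i, Finset.sum_add_distrib, Finset.sum_sub_distrib,
      ← Finset.mul_sum, ← Finset.mul_sum, hd2, hde, he2, hYc, hβ]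
    field_simp
    ring
  have hmain : (∑ u ∈ X, ∑ v ∈ Y.erase u, (codeg E u v : ℝ)) / ((k : ℝ) - 1)
      - volR E X * volR E Y / t = ∑ i, (1 - μ i) * (c' i * d' i) := by
    rw [hbil, ← hcd, hLxy, ← Finset.sum_sub_distrib]
    have key : ∀ i, cs i * ds i - μ i * (cs i * ds i)
        = (1 - μ i) * (c' i * d' i)
          + (β * (es i * c' i) + α * (es i * d' i) + α * β * (es i * es i)) := by
      intro i
      simp only [hc', hd']
      linear_combination (-(β * cs i + α * ds i - α * β * es i)) * (hμe i)
    rw [Finset.sum_congr rfl fun i _ => key i, Finset.sum_add_distrib]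
    have hS2 : ∑ i, (β * (es i * c' i) + α * (es i * d' i) + α * β * (es i * es i))
        = volR E X * volR E Y / t := by
      rw [Finset.sum_add_distrib, Finset.sum_add_distrib, ← Finset.mul_sum, ← Finset.mul_sum,
        ← Finset.mul_sum, hec', hed', he2, hα, hβ]
      field_simp
      ring
    rw [hS2]
    ring
  -- supremum facts
  have heigs : eigsAsc (normLap E) = μ ∘ (Tuple.sort μ) := by
    unfold eigsAsc
    rw [dif_pos hL]
  set z : Fin n := ⟨0, by omega⟩ with hz
  have hlam_ge : ∀ j : Fin n, j ≠ z → |1 - eigsAsc (normLap E) j| ≤ lam := by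
    intro j hj
    rw [hlam]
    exact le_ciSup (f := fun i : {i : Fin n // i ≠ z} => |1 - eigsAsc (normLap E) i.1|)
      (Set.Finite.bddAbove (Set.finite_range _)) ⟨j, hj⟩
  have hlam0 : 0 ≤ lam := by
    refine le_trans (abs_nonneg _) (hlam_ge ⟨1, by omega⟩ ?_)
    rw [hz]
    intro hcontra
    exact absurd (congrArg Fin.val hcontra) (by norm_num)
  set σ := Tuple.sort μ with hσ
  have hmono : Monotone (μ ∘ σ) := by rw [hσ]; exact Tuple.monotone_sort μ
  have hσlam : ∀ i : Fin n, i ≠ σ z → |1 - μ i| ≤ lam := by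
    intro i hi
    have hj : σ⁻¹ i ≠ z := by
      intro h; apply hi; rw [← h]; exact (σ.apply_symm_apply i).symm
    have h2 := hlam_ge (σ⁻¹ i) hj
    rw [heigs] at h2
    simpa [Equiv.apply_symm_apply] using h2
  have hkey : ∀ i, |1 - μ i| ≤ lam ∨ c' i = 0 := by
    intro i
    by_cases hi : i = σ z
    case neg => exact Or.inl (hσlam i hi)
    by_cases hA : ∃ j, j ≠ z ∧ eigsAsc (normLap E) j = eigsAsc (normLap E) z
    · obtain ⟨j, hj, hje⟩ := hA
      left
      rw [hi]
      have h1 : μ (σ z) = eigsAsc (normLap E) z := by rw [heigs]; rfl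
      rw [h1, ← hje]
      exact hlam_ge j hj
    · right
      push_neg at hA
      have hpsd : ∀ i, 0 ≤ μ i := fun i => (normLap_posSemidef hk hunif).eigenvalues_nonneg i
      have hex : ∃ i0, es i0 ≠ 0 := by
        by_contra hno
        push_neg at hno
        have h3 : ∑ i, es i * es i = 0 := Finset.sum_eq_zero fun i _ => by rw [hno i]; ring
        rw [he2] at h3; linarith
      obtain ⟨i0, hi0⟩ := hex
      have hμi0 : μ i0 = 0 := by
        rcases mul_eq_zero.mp (hμe i0) with h | h
        · exact h
        · exact absurd h hi0
      have h0le : eigsAsc (normLap E) z ≤ 0 := by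
        have hle : eigsAsc (normLap E) z ≤ eigsAsc (normLap E) (σ⁻¹ i0) := by
          rw [heigs]
          exact hmono (by simp [hz, Fin.le_def])
        have heq0 : eigsAsc (normLap E) (σ⁻¹ i0) = 0 := by
          rw [heigs]
          simpa [Equiv.apply_symm_apply] using hμi0
        rw [heq0] at hle
        exact hle
      have hge0 : 0 ≤ eigsAsc (normLap E) z := by rw [heigs]; exact hpsd (σ z)
      have hz0 : eigsAsc (normLap E) z = 0 := le_antisymm h0le hge0
      have hes0 : ∀ j, j ≠ σ z → es j = 0 := by
        intro j hj
        by_contra hne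
        have hμj : μ j = 0 := by
          rcases mul_eq_zero.mp (hμe j) with h | h
          · exact h
          · exact absurd h hne
        have h3 : σ⁻¹ j ≠ z := by
          intro h; apply hj; rw [← h]; exact (σ.apply_symm_apply j).symm
        refine hA (σ⁻¹ j) h3 ?_
        rw [hz0, heigs]
        simpa [Equiv.apply_symm_apply] using hμj
      have hsingle : ∑ i, es i * es i = es (σ z) * es (σ z) :=
        Finset.sum_eq_single (σ z) (fun j _ hj => by rw [hes0 j hj]; ring)
          (fun h => absurd (Finset.mem_univ _) h)
      have hene : es (σ z) ≠ 0 := by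
        intro h
        have h4 := he2
        rw [hsingle, h] at h4
        simp at h4
        linarith
      have hc'single : ∑ i, es i * c' i = es (σ z) * c' (σ z) :=
        Finset.sum_eq_single (σ z) (fun j _ hj => by rw [hes0 j hj]; ring)
          (fun h => absurd (Finset.mem_univ _) h)
      have h5 : es (σ z) * c' (σ z) = 0 := by rw [← hc'single, hec']
      rw [hi]
      rcases mul_eq_zero.mp h5 with h | h
      · exact absurd h hene
      · exact h
  -- final chain
  rw [show (∑ u ∈ X, ∑ v ∈ Y.erase u, (codeg E u v : ℝ)) / ((k : ℝ) - 1)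
      - volR E X * volR E Y / t = ∑ i, (1 - μ i) * (c' i * d' i) from hmain]
  have habs : |∑ i, (1 - μ i) * (c' i * d' i)| ≤ lam * ∑ i, |c' i| * |d' i| := by
    refine le_trans (Finset.abs_sum_le_sum_abs _ _) ?_
    rw [Finset.mul_sum]
    refine Finset.sum_le_sum fun i _ => ?_
    rw [abs_mul, abs_mul]
    rcases hkey i with h | h
    · exact mul_le_mul_of_nonneg_right h (mul_nonneg (abs_nonneg _) (abs_nonneg _))
    · rw [h]
      simp
  have hCS : ∑ i, |c' i| * |d' i|
      ≤ Real.sqrt ((volR E X * volR E Xᶜ / t) * (volR E Y * volR E Yᶜ / t)) := by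
    rw [← hc'2, ← hd'2]
    rw [Real.le_sqrt (Finset.sum_nonneg fun i _ => mul_nonneg (abs_nonneg _) (abs_nonneg _))
      (mul_nonneg (Finset.sum_nonneg fun i _ => mul_self_nonneg _)
        (Finset.sum_nonneg fun i _ => mul_self_nonneg _))]
    have hcs := Finset.sum_mul_sq_le_sq_mul_sq Finset.univ (fun i => |c' i|) (fun i => |d' i|)
    simp only [sq_abs] at hcs
    calc (∑ i, |c' i| * |d' i|) ^ 2 ≤ (∑ i, c' i ^ 2) * ∑ i, d' i ^ 2 := hcs
      _ = (∑ i, c' i * c' i) * ∑ i, d' i * d' i := by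
          congr 1
          · exact Finset.sum_congr rfl fun i _ => by ring
          · exact Finset.sum_congr rfl fun i _ => by ring
  have hsqrt : Real.sqrt ((volR E X * volR E Xᶜ / t) * (volR E Y * volR E Yᶜ / t))
      = Real.sqrt (volR E X * volR E Xᶜ * volR E Y * volR E Yᶜ) / t := by
    rw [show (volR E X * volR E Xᶜ / t) * (volR E Y * volR E Yᶜ / t)
        = (volR E X * volR E Xᶜ * volR E Y * volR E Yᶜ) / t ^ 2 by ring]
    rw [Real.sqrt_div' _ (sq_nonneg t), Real.sqrt_sq ht.le]
  calc |∑ i, (1 - μ i) * (c' i * d' i)| ≤ lam * ∑ i, |c' i| * |d' i| := habs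
    _ ≤ lam * Real.sqrt ((volR E X * volR E Xᶜ / t) * (volR E Y * volR E Yᶜ / t)) :=
        mul_le_mul_of_nonneg_left hCS hlam0
    _ = lam * Real.sqrt (volR E X * volR E Xᶜ * volR E Y * volR E Yᶜ) / t := by
        rw [hsqrt, mul_div_assoc]
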